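/- There is a bijection between (isomorphism classes of) unbalanced XY-graphs on n vertices and (isomorphism classes of) XY-graphs with no isolates in Y on t vertices for 0 ≤ t ≤ n − 1, given by deleting a universal vertex u of X together with all vertices of Y whose only neighbor is u. -/

import Mathlib

open SimpleGraph

/-- An XY-graph on `Fin n`: a bipartite graph with a specified bipartition, whose
distinguished part is `X` (the other part `Y` being the complement of `X`). -/
structure XYGraph (n : ℕ) where
  G : SimpleGraph (Fin n)
  X : Finset (Fin n)
  bip : ∀ u v : Fin n, G.Adj u v → (u ∈ X ∧ v ∉ X) ∨ (u ∉ X ∧ v ∈ X)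

/-- No vertex of `Y` (the complement of `X`) is isolated. -/
def NoIsolateY {n : ℕ} (A : XYGraph n) : Prop :=
  ∀ v : Fin n, v ∉ A.X → ∃ u ∈ A.X, A.G.Adj u v

/-- `X` contains a universal vertex: one adjacent to every vertex of `Y`. -/
def HasUniversalX {n : ℕ} (A : XYGraph n) : Prop :=
  ∃ x ∈ A.X, ∀ y : Fin n, y ∉ A.X → A.G.Adj x y

/-- Isomorphism of unbalanced XY-graphs on `Fin n` (no isolates in `Y`, and a
universal vertex in `X`). -/
def UXYRel (n : ℕ)
    (A B : {A : XYGraph n // NoIsolateY A ∧ HasUniversalX A}) : Prop :=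
  ∃ e : A.1.G ≃g B.1.G, ∀ v : Fin n, v ∈ A.1.X ↔ e v ∈ B.1.X

/-- Isomorphism of XY-graphs with no isolates in `Y` on ground sets of size
`t ≤ n − 1`. -/
def SmallXYRel (n : ℕ)
    (A B : Σ t : Fin n, {A : XYGraph t.val // NoIsolateY A}) : Prop :=
  ∃ e : A.2.1.G ≃g B.2.1.G, ∀ v : Fin A.1.val, v ∈ A.2.1.X ↔ e v ∈ B.2.1.X

namespace XYComp

open scoped Classical

variable {n : ℕ}

lemma adj_left_mem {A : XYGraph n} {u v : Fin n} (hv : v ∉ A.X) (h : A.G.Adj u v) :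
    u ∈ A.X := by rcases A.bip u v h with ⟨h1, _⟩ | ⟨_, h2⟩ <;> tauto

lemma adj_right_not_mem {A : XYGraph n} {u v : Fin n} (hu : u ∈ A.X) (h : A.G.Adj u v) :
    v ∉ A.X := by rcases A.bip u v h with ⟨_, h1⟩ | ⟨h2, _⟩ <;> tauto

lemma univ_adj_iff {A : XYGraph n} {u : Fin n} (hu : u ∈ A.X)
    (huniv : ∀ y : Fin n, y ∉ A.X → A.G.Adj u y) (v : Fin n) :
    A.G.Adj u v ↔ v ∉ A.X :=
  ⟨fun h => adj_right_not_mem hu h, fun h => huniv v h⟩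

/-- the set of deleted vertices: `u` together with vertices of `Y` whose only neighbor is `u` -/
noncomputable def delSet (A : XYGraph n) (u : Fin n) : Finset (Fin n) :=
  insert u (Finset.univ.filter (fun y => y ∉ A.X ∧ ∀ w, A.G.Adj w y → w = u))

lemma mem_delSet {A : XYGraph n} {u y : Fin n} :
    y ∈ delSet A u ↔ y = u ∨ (y ∉ A.X ∧ ∀ w, A.G.Adj w y → w = u) := by
  simp [delSet]

noncomputable def keepSet (A : XYGraph n) (u : Fin n) : Finset (Fin n) := (delSet A u)ᶜ

lemma mem_keepSet {A : XYGraph n} {u y : Fin n} :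
    y ∈ keepSet A u ↔ ¬(y = u ∨ (y ∉ A.X ∧ ∀ w, A.G.Adj w y → w = u)) := by
  simp only [keepSet, Finset.mem_compl, mem_delSet]

noncomputable def delT (A : XYGraph n) (u : Fin n) : ℕ := (keepSet A u).card

lemma delT_lt (A : XYGraph n) (u : Fin n) : delT A u < n := by
  have h1 : keepSet A u ⊂ Finset.univ := by
    refine Finset.ssubset_univ_iff.mpr (fun h => ?_)
    have : u ∈ keepSet A u := h ▸ Finset.mem_univ u
    rw [mem_keepSet] at this
    exact this (Or.inl rfl)
  simpa [delT] using Finset.card_lt_card h1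

noncomputable def delPhi (A : XYGraph n) (u : Fin n) :
    Fin (delT A u) ≃o (keepSet A u : Finset (Fin n)) :=
  (keepSet A u).orderIsoOfFin rfl

/-- Deletion of a vertex `u` together with the vertices of `Y` seeing only `u`. -/
noncomputable def del (A : XYGraph n) (u : Fin n) :
    Σ t : Fin n, {B : XYGraph t.val // NoIsolateY B} := by
  refine ⟨⟨delT A u, delT_lt A u⟩,
    ⟨⟨A.G.comap (fun i => (delPhi A u i : Fin n)),
      Finset.univ.filter (fun i => (delPhi A u i : Fin n) ∈ A.X), ?_⟩, ?_⟩⟩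
  · intro i j h
    simp only [Finset.mem_filter, Finset.mem_univ, true_and]
    exact A.bip _ _ h
  · intro i hi
    simp only [Finset.mem_filter, Finset.mem_univ, true_and] at hi
    have hk : (delPhi A u i : Fin n) ∈ keepSet A u := (delPhi A u i).2
    rw [mem_keepSet] at hk
    push_neg at hk
    obtain ⟨w, hw, hwu⟩ := by
      have := hk.2 hi
      exact this
    have hwX : w ∈ A.X := adj_left_mem hi hw
    have hwk : w ∈ keepSet A u := by
      rw [mem_keepSet]
      push_neg
      exact ⟨hwu, fun h => absurd hwX h⟩
    obtain ⟨j, hj⟩ := (delPhi A u).surjective ⟨w, hwk⟩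
    refine ⟨j, ?_, ?_⟩
    · simp only [Finset.mem_filter, Finset.mem_univ, true_and, hj]; exact hwX
    · show A.G.Adj ((delPhi A u j : Fin n)) ((delPhi A u i : Fin n))
      rw [hj]
      exact hw


lemma mem_delSet_iso {A B : XYGraph n} (e : A.G ≃g B.G)
    (hX : ∀ v, v ∈ A.X ↔ e v ∈ B.X) (u y : Fin n) :
    y ∈ delSet A u ↔ e y ∈ delSet B (e u) := by
  rw [mem_delSet, mem_delSet]
  constructor
  · rintro (rfl | ⟨h1, h2⟩)
    · exact Or.inl rfl
    · refine Or.inr ⟨fun h => h1 ((hX y).mpr h), fun w hw => ?_⟩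
      have hw' : A.G.Adj (e.symm w) y := by
        rw [← e.map_rel_iff]
        simpa using hw
      have := h2 _ hw'
      rw [← this]
      simp
  · rintro (h | ⟨h1, h2⟩)
    · exact Or.inl (e.injective h)
    · refine Or.inr ⟨fun h => h1 ((hX y).mp h), fun w hw => ?_⟩
      have : B.G.Adj (e w) (e y) := e.map_rel_iff.mpr hw
      exact e.injective (h2 _ this)

lemma mem_keepSet_iso {A B : XYGraph n} (e : A.G ≃g B.G)
    (hX : ∀ v, v ∈ A.X ↔ e v ∈ B.X) (u y : Fin n) :
    y ∈ keepSet A u ↔ e y ∈ keepSet B (e u) := by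
  simp only [keepSet, Finset.mem_compl]
  exact not_congr (mem_delSet_iso e hX u y)

lemma del_iso {A B : XYGraph n} (e : A.G ≃g B.G)
    (hX : ∀ v, v ∈ A.X ↔ e v ∈ B.X) (u : Fin n) :
    SmallXYRel n (del A u) (del B (e u)) := by
  set u' := e u with hu'
  have hkeep : ∀ y, y ∈ keepSet A u ↔ e y ∈ keepSet B u' := fun y =>
    mem_keepSet_iso e hX u y
  have hkeep' : ∀ y, (h : y ∈ keepSet B u') → e.symm y ∈ keepSet A u := by
    intro y h
    rw [hkeep (e.symm y)]
    simpa using h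
  refine ⟨⟨⟨fun i => (delPhi B u').symm ⟨e (delPhi A u i), (hkeep _).mp (delPhi A u i).2⟩,
      fun j => (delPhi A u).symm ⟨e.symm (delPhi B u' j), hkeep' _ (delPhi B u' j).2⟩,
      ?_, ?_⟩, ?_⟩, ?_⟩
  · intro i; simp; exact (delPhi A u).symm_apply_apply i
  · intro j; simp; exact (delPhi B u').symm_apply_apply j
  · intro i j
    show B.G.Adj _ _ ↔ A.G.Adj _ _
    show B.G.Adj ((delPhi B u' ((delPhi B u').symm ⟨e (delPhi A u i), (hkeep _).mp (delPhi A u i).2⟩) : Fin n))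
      ((delPhi B u' ((delPhi B u').symm ⟨e (delPhi A u j), (hkeep _).mp (delPhi A u j).2⟩) : Fin n)) ↔ _
    rw [OrderIso.apply_symm_apply, OrderIso.apply_symm_apply]
    exact e.map_rel_iff
  · intro i
    show _ ∈ Finset.filter _ _ ↔ _ ∈ Finset.filter _ _
    refine (Finset.mem_filter.trans (and_iff_right (Finset.mem_univ _))).trans
      (Iff.trans ?_ (Finset.mem_filter.trans (and_iff_right (Finset.mem_univ _))).symm)
    show _ ↔ ((delPhi B u' ((delPhi B u').symm ⟨e (delPhi A u i), (hkeep _).mp (delPhi A u i).2⟩) : Fin n)) ∈ B.X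
    rw [OrderIso.apply_symm_apply]
    exact hX _


lemma swap_adj_aux {A : XYGraph n} {u u' : Fin n} (hu : u ∈ A.X)
    (hu2 : ∀ y, y ∉ A.X → A.G.Adj u y) (hu' : u' ∈ A.X)
    (hu2' : ∀ y, y ∉ A.X → A.G.Adj u' y) :
    ∀ a b, A.G.Adj a b → A.G.Adj (Equiv.swap u u' a) (Equiv.swap u u' b) := by
  have hfix : ∀ x, x ∉ A.X → Equiv.swap u u' x = x := by
    intro x hx
    apply Equiv.swap_apply_of_ne_of_ne <;> rintro rfl <;> tauto
  have hone : ∀ a b, a ∈ A.X → A.G.Adj a b →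
      A.G.Adj (Equiv.swap u u' a) (Equiv.swap u u' b) := by
    intro a b ha hab
    have hb : b ∉ A.X := adj_right_not_mem ha hab
    rw [hfix b hb]
    rcases eq_or_ne a u with rfl | h1
    · rw [Equiv.swap_apply_left]; exact hu2' b hb
    rcases eq_or_ne a u' with rfl | h2
    · rw [Equiv.swap_apply_right]; exact hu2 b hb
    · rw [Equiv.swap_apply_of_ne_of_ne h1 h2]; exact hab
  intro a b hab
  rcases A.bip a b hab with ⟨ha, _⟩ | ⟨_, hb⟩
  · exact hone a b ha hab
  · exact (hone b a hb hab.symm).symm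

noncomputable def swapIso {A : XYGraph n} {u u' : Fin n} (hu : u ∈ A.X)
    (hu2 : ∀ y, y ∉ A.X → A.G.Adj u y) (hu' : u' ∈ A.X)
    (hu2' : ∀ y, y ∉ A.X → A.G.Adj u' y) : A.G ≃g A.G :=
  ⟨Equiv.swap u u', by
    intro a b
    constructor
    · intro h
      have := swap_adj_aux hu hu2 hu' hu2' _ _ h
      simpa [Equiv.swap_apply_self] using this
    · exact swap_adj_aux hu hu2 hu' hu2' a b⟩

lemma swap_memX {u u' : Fin n} {X : Finset (Fin n)} (hu : u ∈ X) (hu' : u' ∈ X)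
    (v : Fin n) : Equiv.swap u u' v ∈ X ↔ v ∈ X := by
  rcases eq_or_ne v u with rfl | h1
  · simp [hu, hu']
  rcases eq_or_ne v u' with rfl | h2
  · simp [hu, hu']
  · rw [Equiv.swap_apply_of_ne_of_ne h1 h2]

lemma del_swap {A : XYGraph n} {u u' : Fin n} (hu : u ∈ A.X)
    (hu2 : ∀ y, y ∉ A.X → A.G.Adj u y) (hu' : u' ∈ A.X)
    (hu2' : ∀ y, y ∉ A.X → A.G.Adj u' y) :
    SmallXYRel n (del A u) (del A u') := by
  have h := del_iso (swapIso hu hu2 hu' hu2')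
    (fun v => (swap_memX hu hu' v).symm) u
  have he : (swapIso hu hu2 hu' hu2') u = u' := Equiv.swap_apply_left u u'
  rwa [he] at h

lemma small_trans {A B C : Σ t : Fin n, {A : XYGraph t.val // NoIsolateY A}}
    (h1 : SmallXYRel n A B) (h2 : SmallXYRel n B C) : SmallXYRel n A C := by
  obtain ⟨e1, hX1⟩ := h1
  obtain ⟨e2, hX2⟩ := h2
  refine ⟨e1.trans e2, fun v => ?_⟩
  have := (hX1 v).trans (hX2 (e1 v))
  simpa using this

noncomputable def fwd (A : {A : XYGraph n // NoIsolateY A ∧ HasUniversalX A}) :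
    Σ t : Fin n, {B : XYGraph t.val // NoIsolateY B} :=
  del A.1 (Classical.choose A.2.2)

lemma fwd_rel {A B : {A : XYGraph n // NoIsolateY A ∧ HasUniversalX A}}
    (h : UXYRel n A B) : SmallXYRel n (fwd A) (fwd B) := by
  obtain ⟨e, hX⟩ := h
  obtain ⟨huA, huA2⟩ := Classical.choose_spec A.2.2
  obtain ⟨huB, huB2⟩ := Classical.choose_spec B.2.2
  have h1 : SmallXYRel n (del A.1 (Classical.choose A.2.2))
      (del B.1 (e (Classical.choose A.2.2))) := del_iso e hX _
  have heu : e (Classical.choose A.2.2) ∈ B.1.X := (hX _).mp huA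
  have heu2 : ∀ y, y ∉ B.1.X → B.1.G.Adj (e (Classical.choose A.2.2)) y := by
    intro y hy
    have h3 : e.symm y ∉ A.1.X := by
      intro h4
      apply hy
      have := (hX (e.symm y)).mp h4
      simpa using this
    have h5 := huA2 _ h3
    have h6 := e.map_rel_iff.mpr h5
    simpa using h6
  exact small_trans h1 (del_swap heu heu2 huB huB2)


/-! ### Backward construction -/

def addX (t : Fin n) (B : XYGraph t.val) : Finset (Fin n) :=
  insert t (B.X.map ⟨Fin.castLE t.2.le, Fin.castLE_injective t.2.le⟩)

lemma castLE_ne_t (t : Fin n) (i : Fin t.val) : Fin.castLE t.2.le i ≠ t := by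
  intro h
  have := congrArg Fin.val h
  simp at this
  omega

lemma t_mem_addX (t : Fin n) (B : XYGraph t.val) : t ∈ addX t B :=
  Finset.mem_insert_self _ _

lemma mem_addX_castLE (t : Fin n) (B : XYGraph t.val) (i : Fin t.val) :
    Fin.castLE t.2.le i ∈ addX t B ↔ i ∈ B.X := by
  simp only [addX, Finset.mem_insert, Finset.mem_map, Function.Embedding.coeFn_mk]
  constructor
  · rintro (h | ⟨j, hj, hj2⟩)
    · exact absurd h (castLE_ne_t t i)
    · rwa [← Fin.castLE_injective t.2.le hj2]
  · intro h
    exact Or.inr ⟨i, h, rfl⟩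

lemma mem_addX_of_ge {t : Fin n} {B : XYGraph t.val} {a : Fin n}
    (h : ¬ a.val < t.val) : a ∈ addX t B ↔ a = t := by
  simp only [addX, Finset.mem_insert, Finset.mem_map, Function.Embedding.coeFn_mk]
  constructor
  · rintro (h1 | ⟨j, _, rfl⟩)
    · exact h1
    · exact absurd j.2 (by simpa using h)
  · exact Or.inl

lemma castLE_mk_val {t : Fin n} {a : Fin n} (h : a.val < t.val) :
    Fin.castLE t.2.le ⟨a.val, h⟩ = a := Fin.ext rfl

def addG (t : Fin n) (B : XYGraph t.val) : SimpleGraph (Fin n) where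
  Adj a b := (∃ i j, B.G.Adj i j ∧ a = Fin.castLE t.2.le i ∧ b = Fin.castLE t.2.le j)
    ∨ (a = t ∧ b ∉ addX t B) ∨ (b = t ∧ a ∉ addX t B)
  symm := by
    constructor
    rintro a b (⟨i, j, h, rfl, rfl⟩ | ⟨rfl, h⟩ | ⟨rfl, h⟩)
    · exact Or.inl ⟨j, i, h.symm, rfl, rfl⟩
    · exact Or.inr (Or.inr ⟨rfl, h⟩)
    · exact Or.inr (Or.inl ⟨rfl, h⟩)
  loopless := by
    constructor
    rintro a (⟨i, j, h, rfl, h2⟩ | ⟨ha, h⟩ | ⟨ha, h⟩)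
    · have hij : i = j := Fin.castLE_injective t.2.le h2
      exact B.G.loopless.irrefl i (hij ▸ h)
    · rw [ha] at h
      exact h (t_mem_addX t B)
    · rw [ha] at h
      exact h (t_mem_addX t B)

lemma addG_adj {t : Fin n} {B : XYGraph t.val} {a b : Fin n} :
    (addG t B).Adj a b ↔
      (∃ i j, B.G.Adj i j ∧ a = Fin.castLE t.2.le i ∧ b = Fin.castLE t.2.le j)
        ∨ (a = t ∧ b ∉ addX t B) ∨ (b = t ∧ a ∉ addX t B) := Iff.rfl

def bwdG (t : Fin n) (B : XYGraph t.val) : XYGraph n where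
  G := addG t B
  X := addX t B
  bip := by
    rintro a b (⟨i, j, h, rfl, rfl⟩ | ⟨ha, h⟩ | ⟨hb, h⟩)
    · rcases B.bip i j h with ⟨h1, h2⟩ | ⟨h1, h2⟩
      · exact Or.inl ⟨(mem_addX_castLE t B i).mpr h1,
          fun hc => h2 ((mem_addX_castLE t B j).mp hc)⟩
      · exact Or.inr ⟨fun hc => h1 ((mem_addX_castLE t B i).mp hc),
          (mem_addX_castLE t B j).mpr h2⟩
    · rw [ha]
      exact Or.inl ⟨t_mem_addX t B, h⟩
    · rw [hb]
      exact Or.inr ⟨h, t_mem_addX t B⟩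

def bwdX (t : Fin n) (B : {A : XYGraph t.val // NoIsolateY A}) :
    {A : XYGraph n // NoIsolateY A ∧ HasUniversalX A} :=
  ⟨bwdG t B.1,
    fun v hv => ⟨t, t_mem_addX t B.1, Or.inr (Or.inl ⟨rfl, hv⟩)⟩,
    ⟨t, t_mem_addX t B.1, fun y hy => Or.inr (Or.inl ⟨rfl, hy⟩)⟩⟩

noncomputable def bwd (B : Σ t : Fin n, {A : XYGraph t.val // NoIsolateY A}) :
    {A : XYGraph n // NoIsolateY A ∧ HasUniversalX A} := bwdX B.1 B.2

/-! ### transport of the backward construction along isomorphisms -/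

def shiftFun (t : Fin n) (e : Fin t.val ≃ Fin t.val) (a : Fin n) : Fin n :=
  if h : a.val < t.val then Fin.castLE t.2.le (e ⟨a.val, h⟩) else a

lemma shiftFun_castLE (t : Fin n) (e : Fin t.val ≃ Fin t.val) (i : Fin t.val) :
    shiftFun t e (Fin.castLE t.2.le i) = Fin.castLE t.2.le (e i) := by
  have h : (Fin.castLE t.2.le i).val < t.val := i.2
  rw [shiftFun, dif_pos h]
  have h2 : (⟨(Fin.castLE t.2.le i).val, h⟩ : Fin t.val) = i := Fin.ext rfl
  rw [h2]

lemma shiftFun_of_ge (t : Fin n) (e : Fin t.val ≃ Fin t.val) {a : Fin n}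
    (h : ¬ a.val < t.val) : shiftFun t e a = a := dif_neg h

lemma shiftFun_t (t : Fin n) (e : Fin t.val ≃ Fin t.val) :
    shiftFun t e t = t := shiftFun_of_ge t e (lt_irrefl _)

lemma shiftFun_shiftFun (t : Fin n) (e : Fin t.val ≃ Fin t.val) (a : Fin n) :
    shiftFun t e.symm (shiftFun t e a) = a := by
  by_cases h : a.val < t.val
  · rw [← castLE_mk_val h, shiftFun_castLE, shiftFun_castLE, Equiv.symm_apply_apply,
      castLE_mk_val]
  · rw [shiftFun_of_ge t e h, shiftFun_of_ge t e.symm h]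

lemma shiftFun_eq_t_iff (t : Fin n) (e : Fin t.val ≃ Fin t.val) (a : Fin n) :
    shiftFun t e a = t ↔ a = t := by
  by_cases h : a.val < t.val
  · rw [← castLE_mk_val h, shiftFun_castLE]
    exact ⟨fun hc => absurd hc (castLE_ne_t t _), fun hc => absurd hc (castLE_ne_t t _)⟩
  · rw [shiftFun_of_ge t e h]

lemma mem_addX_shiftFun {t : Fin n} {B1 B2 : XYGraph t.val} (e : Fin t.val ≃ Fin t.val)
    (hX : ∀ i, i ∈ B1.X ↔ e i ∈ B2.X) (a : Fin n) :
    shiftFun t e a ∈ addX t B2 ↔ a ∈ addX t B1 := by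
  by_cases h : a.val < t.val
  · rw [← castLE_mk_val h, shiftFun_castLE, mem_addX_castLE, mem_addX_castLE]
    exact (hX _).symm
  · rw [shiftFun_of_ge t e h, mem_addX_of_ge h, mem_addX_of_ge h]

lemma shift_adj {t : Fin n} {B1 B2 : XYGraph t.val} (e : Fin t.val ≃ Fin t.val)
    (he : ∀ i j, B1.G.Adj i j → B2.G.Adj (e i) (e j))
    (hX : ∀ i, i ∈ B1.X ↔ e i ∈ B2.X) :
    ∀ a b, (addG t B1).Adj a b → (addG t B2).Adj (shiftFun t e a) (shiftFun t e b) := by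
  rintro a b (⟨i, j, h, rfl, rfl⟩ | ⟨ha, h⟩ | ⟨hb, h⟩)
  · exact Or.inl ⟨e i, e j, he i j h, shiftFun_castLE t e i, shiftFun_castLE t e j⟩
  · rw [ha]
    exact Or.inr (Or.inl ⟨shiftFun_t t e, fun hc => h ((mem_addX_shiftFun e hX b).mp hc)⟩)
  · rw [hb]
    exact Or.inr (Or.inr ⟨shiftFun_t t e, fun hc => h ((mem_addX_shiftFun e hX a).mp hc)⟩)

lemma bwd_rel {A B : Σ t : Fin n, {A : XYGraph t.val // NoIsolateY A}}
    (h : SmallXYRel n A B) : UXYRel n (bwd A) (bwd B) := by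
  obtain ⟨t, B1⟩ := A
  obtain ⟨t', B2⟩ := B
  obtain ⟨e, hX⟩ := h
  have ht : t = t' := by
    apply Fin.ext
    simpa using Fintype.card_congr e.toEquiv
  subst ht
  have he : ∀ i j, B1.1.G.Adj i j → B2.1.G.Adj (e i) (e j) := fun i j h =>
    e.map_rel_iff.mpr h
  have happ : ∀ i, e (e.toEquiv.symm i) = i := fun i => e.toEquiv.apply_symm_apply i
  have he' : ∀ i j, B2.1.G.Adj i j → B1.1.G.Adj (e.toEquiv.symm i) (e.toEquiv.symm j) := by
    intro i j h
    rw [← e.map_rel_iff, happ, happ]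
    exact h
  have hX' : ∀ i, i ∈ B2.1.X ↔ e.toEquiv.symm i ∈ B1.1.X := by
    intro i
    rw [hX (e.toEquiv.symm i), happ]
  refine ⟨⟨⟨shiftFun t e.toEquiv, shiftFun t e.toEquiv.symm,
      shiftFun_shiftFun t e.toEquiv, ?_⟩, ?_⟩, ?_⟩
  · intro a
    have := shiftFun_shiftFun t e.toEquiv.symm a
    simpa using this
  · intro a b
    simp only [Equiv.coe_fn_mk]
    constructor
    · intro hadj
      have h2 := shift_adj e.toEquiv.symm he' (fun i => (hX' i)) _ _ hadj
      rwa [shiftFun_shiftFun, shiftFun_shiftFun] at h2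
    · exact shift_adj e.toEquiv he hX a b
  · intro v
    show v ∈ addX t B1.1 ↔ shiftFun t e.toEquiv v ∈ addX t B2.1
    exact (mem_addX_shiftFun e.toEquiv hX v).symm


/-! ### fwd ∘ bwd -/

lemma mem_keep_bwd (t : Fin n) (B : {A : XYGraph t.val // NoIsolateY A}) (a : Fin n) :
    a ∈ keepSet (bwdG t B.1) t ↔ a.val < t.val := by
  rw [mem_keepSet]
  constructor
  · intro h
    by_contra hge
    push_neg at hge
    apply h
    rcases eq_or_lt_of_le hge with heq | hlt
    · exact Or.inl (Fin.ext heq.symm)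
    · refine Or.inr ⟨?_, ?_⟩
      · show a ∉ addX t B.1
        rw [mem_addX_of_ge (by omega)]
        intro hc
        rw [hc] at hlt
        exact lt_irrefl _ hlt
      · intro w hw
        rcases hw with ⟨i, j, hadj, rfl, hb⟩ | ⟨hw1, _⟩ | ⟨hb, _⟩
        · have := j.2
          rw [hb] at hlt
          simp only [Fin.coe_castLE] at hlt
          omega
        · exact hw1
        · rw [hb] at hlt
          exact absurd hlt (lt_irrefl _)
  · intro hlt
    rintro (rfl | ⟨hnx, honly⟩)
    · exact absurd hlt (lt_irrefl _)
    · have hnx' : (⟨a.val, hlt⟩ : Fin t.val) ∉ B.1.X := by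
        intro h
        apply hnx
        show a ∈ addX t B.1
        rw [← castLE_mk_val hlt]
        exact (mem_addX_castLE t B.1 _).mpr h
      obtain ⟨x, hx, hadj⟩ := B.2 _ hnx'
      have hxt : Fin.castLE t.2.le x = t := honly _
        (Or.inl ⟨x, ⟨a.val, hlt⟩, hadj, rfl, (castLE_mk_val hlt).symm⟩)
      exact castLE_ne_t t x hxt

lemma fwd_bwd (t : Fin n) (B : {A : XYGraph t.val // NoIsolateY A}) :
    SmallXYRel n (del (bwdG t B.1) t) ⟨t, B⟩ := by
  set C := bwdG t B.1 with hC
  have hk : ∀ a, a ∈ keepSet C t ↔ a.val < t.val := mem_keep_bwd t B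
  have hφ : ∀ i : Fin (delT C t), (delPhi C t i : Fin n).val < t.val :=
    fun i => (hk _).mp (delPhi C t i).2
  refine ⟨⟨⟨fun i => ⟨(delPhi C t i : Fin n).val, hφ i⟩,
      fun j => (delPhi C t).symm ⟨Fin.castLE t.2.le j, (hk _).mpr j.2⟩, ?_, ?_⟩, ?_⟩, ?_⟩
  · intro i
    dsimp only
    exact ((delPhi C t).toEquiv.symm_apply_eq).mpr (Subtype.ext (castLE_mk_val (hφ i)))
  · intro j
    dsimp only
    simp only [OrderIso.apply_symm_apply]
    exact Fin.ext rfl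
  · intro i j
    simp only [Equiv.coe_fn_mk]
    show B.1.G.Adj _ _ ↔ (addG t B.1).Adj ((delPhi C t i : Fin n)) ((delPhi C t j : Fin n))
    constructor
    · intro h
      exact Or.inl ⟨⟨_, hφ i⟩, ⟨_, hφ j⟩, h,
        (castLE_mk_val (hφ i)).symm, (castLE_mk_val (hφ j)).symm⟩
    · rintro (⟨i', j', hadj, hi', hj'⟩ | ⟨hti, _⟩ | ⟨htj, _⟩)
      · have h1 : (⟨(delPhi C t i : Fin n).val, hφ i⟩ : Fin t.val) = i' :=
          Fin.ext (show (delPhi C t i : Fin n).val = i'.val from congrArg Fin.val hi')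
        have h2 : (⟨(delPhi C t j : Fin n).val, hφ j⟩ : Fin t.val) = j' :=
          Fin.ext (show (delPhi C t j : Fin n).val = j'.val from congrArg Fin.val hj')
        show B.1.G.Adj ⟨(delPhi C t i : Fin n).val, hφ i⟩ ⟨(delPhi C t j : Fin n).val, hφ j⟩
        rw [h1, h2]
        exact hadj
      · have := hφ i
        rw [hti] at this
        exact absurd this (lt_irrefl _)
      · have := hφ j
        rw [htj] at this
        exact absurd this (lt_irrefl _)
  · intro v
    have hL : v ∈ (del C t).2.1.X ↔ (delPhi C t v : Fin n) ∈ C.X := by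
      show v ∈ Finset.univ.filter _ ↔ _
      exact Finset.mem_filter.trans (and_iff_right (Finset.mem_univ _))
    rw [hL]
    show _ ∈ addX t B.1 ↔ _
    rw [← castLE_mk_val (hφ v), mem_addX_castLE]
    rfl


/-! ### bwd ∘ fwd -/

lemma mem_addX_iff_lt {t : Fin n} {B : XYGraph t.val} {a : Fin n} (h : a.val < t.val) :
    a ∈ addX t B ↔ (⟨a.val, h⟩ : Fin t.val) ∈ B.X := by
  simp only [addX, Finset.mem_insert, Finset.mem_map, Function.Embedding.coeFn_mk]
  constructor
  · rintro (rfl | ⟨j, hj, rfl⟩)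
    · exact absurd h (lt_irrefl _)
    · have h2 : (⟨(Fin.castLE t.2.le j).val, h⟩ : Fin t.val) = j := Fin.ext rfl
      rwa [h2]
  · intro hmem
    exact Or.inr ⟨⟨a.val, h⟩, hmem, castLE_mk_val h⟩

lemma addG_adj_cases {t : Fin n} {B : XYGraph t.val} {a b : Fin n}
    (h : (addG t B).Adj a b) :
    (a.val < t.val ∧ b.val < t.val) ∨ (a = t ∧ b ∉ addX t B) ∨ (b = t ∧ a ∉ addX t B) := by
  rcases h with ⟨i, j, _, rfl, rfl⟩ | h | h
  · exact Or.inl ⟨by simpa using i.2, by simpa using j.2⟩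
  · exact Or.inr (Or.inl h)
  · exact Or.inr (Or.inr h)

lemma del_fst_val (G : XYGraph n) (u : Fin n) : ((del G u).1 : Fin n).val = delT G u := rfl

lemma u_mem_delSet (G : XYGraph n) (u : Fin n) : u ∈ delSet G u :=
  mem_delSet.mpr (Or.inl rfl)

lemma delSet_card (G : XYGraph n) (u : Fin n) : (delSet G u).card = n - delT G u := by
  have h1 : (delSet G u)ᶜ.card = delT G u := rfl
  have h2 := Finset.card_compl (delSet G u)
  have h3 : (delSet G u).card ≤ n := by simpa using Finset.card_le_univ (delSet G u)
  simp only [Fintype.card_fin] at h2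
  omega

noncomputable def DSet (G : XYGraph n) (u : Fin n) : Finset (Fin n) := (delSet G u).erase u

lemma DSet_card (G : XYGraph n) (u : Fin n) : (DSet G u).card = n - delT G u - 1 := by
  rw [DSet, Finset.card_erase_of_mem (u_mem_delSet G u), delSet_card]

lemma DSet_not_memX {G : XYGraph n} {u x : Fin n} (h : x ∈ DSet G u) : x ∉ G.X := by
  rw [DSet, Finset.mem_erase, mem_delSet] at h
  rcases h with ⟨hne, rfl | ⟨h1, _⟩⟩
  · exact absurd rfl hne
  · exact h1

lemma DSet_only {G : XYGraph n} {u x : Fin n} (h : x ∈ DSet G u) :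
    ∀ w, G.G.Adj w x → w = u := by
  rw [DSet, Finset.mem_erase, mem_delSet] at h
  rcases h with ⟨hne, rfl | ⟨_, h2⟩⟩
  · exact absurd rfl hne
  · exact h2

lemma keep_ne_u {G : XYGraph n} {u x : Fin n} (h : x ∈ keepSet G u) : x ≠ u := by
  rintro rfl
  exact (mem_keepSet.mp h) (Or.inl rfl)

lemma keep_not_delSet {G : XYGraph n} {u x : Fin n} (h : x ∈ keepSet G u) :
    x ∉ delSet G u := Finset.mem_compl.mp h

noncomputable def phiD (G : XYGraph n) (u : Fin n) :
    Fin (n - delT G u - 1) ≃o (DSet G u : Finset (Fin n)) :=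
  (DSet G u).orderIsoOfFin (DSet_card G u)

noncomputable def mFun (G : XYGraph n) (u : Fin n) (a : Fin n) : Fin n :=
  if h : a.val < delT G u then ↑(delPhi G u ⟨a.val, h⟩)
  else if h2 : a.val = delT G u then u
  else ↑(phiD G u ⟨a.val - delT G u - 1, by have := a.isLt; omega⟩)

lemma mFun_lt {G : XYGraph n} {u a : Fin n} (h : a.val < delT G u) :
    mFun G u a = ↑(delPhi G u ⟨a.val, h⟩) := dif_pos h

lemma mFun_eq {G : XYGraph n} {u a : Fin n} (h : a.val = delT G u) :
    mFun G u a = u := by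
  rw [mFun, dif_neg (by omega), dif_pos h]

lemma mFun_gt_val {G : XYGraph n} {u a : Fin n} (h : delT G u < a.val)
    (h3 : a.val - delT G u - 1 < n - delT G u - 1) :
    mFun G u a = ↑(phiD G u ⟨a.val - delT G u - 1, h3⟩) := by
  rw [mFun, dif_neg (by omega), dif_neg (by omega)]

lemma mFun_mem_keep {G : XYGraph n} {u a : Fin n} (h : a.val < delT G u) :
    mFun G u a ∈ keepSet G u := by
  rw [mFun_lt h]
  exact (delPhi G u _).2

lemma mFun_mem_D {G : XYGraph n} {u a : Fin n} (h : delT G u < a.val) :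
    mFun G u a ∈ DSet G u := by
  have h3 : a.val - delT G u - 1 < n - delT G u - 1 := by have := a.isLt; omega
  rw [mFun_gt_val h h3]
  exact (phiD G u _).2

lemma mFun_inj (G : XYGraph n) (u : Fin n) : Function.Injective (mFun G u) := by
  intro a b hab
  rcases lt_trichotomy a.val (delT G u) with ha | ha | ha <;>
    rcases lt_trichotomy b.val (delT G u) with hb | hb | hb
  · rw [mFun_lt ha, mFun_lt hb] at hab
    have h3 : (⟨a.val, ha⟩ : Fin (delT G u)) = ⟨b.val, hb⟩ :=
      (delPhi G u).injective (Subtype.coe_injective hab)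
    have h4 : (⟨a.val, ha⟩ : Fin (delT G u)).val = (⟨b.val, hb⟩ : Fin (delT G u)).val :=
      congrArg Fin.val h3
    exact Fin.ext h4
  · have h1 := mFun_mem_keep ha
    rw [hab, mFun_eq hb] at h1
    exact absurd rfl (keep_ne_u h1)
  · have h1 := mFun_mem_keep ha
    have h2 := mFun_mem_D hb
    rw [hab] at h1
    exact absurd (Finset.mem_of_mem_erase h2) (keep_not_delSet h1)
  · have h1 := mFun_mem_keep hb
    rw [← hab, mFun_eq ha] at h1
    exact absurd rfl (keep_ne_u h1)
  · exact Fin.ext (ha.trans hb.symm)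
  · have h2 := mFun_mem_D hb
    rw [← hab, mFun_eq ha] at h2
    exact absurd rfl (Finset.ne_of_mem_erase h2)
  · have h1 := mFun_mem_keep hb
    have h2 := mFun_mem_D ha
    rw [← hab] at h1
    exact absurd (Finset.mem_of_mem_erase h2) (keep_not_delSet h1)
  · have h2 := mFun_mem_D ha
    rw [hab, mFun_eq hb] at h2
    exact absurd rfl (Finset.ne_of_mem_erase h2)
  · have h3 : a.val - delT G u - 1 < n - delT G u - 1 := by have := a.isLt; omega
    have h4 : b.val - delT G u - 1 < n - delT G u - 1 := by have := b.isLt; omega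
    rw [mFun_gt_val ha h3, mFun_gt_val hb h4] at hab
    have h5 := (phiD G u).injective (Subtype.coe_injective hab)
    have h6 := congrArg Fin.val h5
    simp only [] at h6
    exact Fin.ext (by omega)

lemma mFun_bij (G : XYGraph n) (u : Fin n) : Function.Bijective (mFun G u) :=
  Finite.injective_iff_bijective.mp (mFun_inj G u)


lemma bwd_del (A : {A : XYGraph n // NoIsolateY A ∧ HasUniversalX A}) (u : Fin n)
    (hu : u ∈ A.1.X) (hu2 : ∀ y, y ∉ A.1.X → A.1.G.Adj u y) :
    UXYRel n (bwd (del A.1 u)) A := by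
  set G := A.1 with hG
  have hAdjU : ∀ v, G.G.Adj u v ↔ v ∉ G.X := univ_adj_iff hu hu2
  have hanet : ∀ {a : Fin n}, a.val ≠ delT G u → a ≠ (del G u).1 := by
    intro a h hc
    exact h (congrArg Fin.val hc)
  have hLX : ∀ a : Fin n, a ∈ addX (del G u).1 (del G u).2.1 ↔ mFun G u a ∈ G.X := by
    intro a
    rcases lt_trichotomy a.val (delT G u) with ha | ha | ha
    · rw [mem_addX_iff_lt (show a.val < ((del G u).1 : Fin n).val from ha), mFun_lt ha]
      show _ ∈ Finset.univ.filter _ ↔ _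
      exact Finset.mem_filter.trans (and_iff_right (Finset.mem_univ _))
    · refine iff_of_true ?_ (by rw [mFun_eq ha]; exact hu)
      have h1 : a = (del G u).1 := Fin.ext ha
      rw [h1]
      exact t_mem_addX _ _
    · have hge : ¬ a.val < ((del G u).1 : Fin n).val := by rw [del_fst_val]; omega
      have h1 : a ∉ addX (del G u).1 (del G u).2.1 := by
        rw [mem_addX_of_ge hge]
        exact hanet (by omega)
      exact iff_of_false h1 (fun hc => DSet_not_memX (mFun_mem_D ha) hc)
  have hadj : ∀ a b : Fin n, G.G.Adj (mFun G u a) (mFun G u b) ↔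
      (addG (del G u).1 (del G u).2.1).Adj a b := by
    intro a b
    rcases lt_trichotomy a.val (delT G u) with ha | ha | ha <;>
      rcases lt_trichotomy b.val (delT G u) with hb | hb | hb
    · constructor
      · intro h
        refine Or.inl ⟨⟨a.val, ha⟩, ⟨b.val, hb⟩, ?_,
          (castLE_mk_val (t := (del G u).1) ha).symm,
          (castLE_mk_val (t := (del G u).1) hb).symm⟩
        show G.G.Adj _ _
        rw [mFun_lt ha, mFun_lt hb] at h
        exact h
      · rintro (⟨i, j, hij, hai, hbj⟩ | ⟨hat, _⟩ | ⟨hbt, _⟩)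
        · rw [mFun_lt ha, mFun_lt hb]
          have h5 : a.val = (Fin.castLE (del G u).1.2.le i).val := congrArg Fin.val hai
          have h6 : (⟨a.val, ha⟩ : Fin (delT G u)) = i := Fin.ext h5
          have h7 : b.val = (Fin.castLE (del G u).1.2.le j).val := congrArg Fin.val hbj
          have h8 : (⟨b.val, hb⟩ : Fin (delT G u)) = j := Fin.ext h7
          rw [h6, h8]
          exact hij
        · exact absurd (congrArg Fin.val hat) (by rw [del_fst_val]; omega)
        · exact absurd (congrArg Fin.val hbt) (by rw [del_fst_val]; omega)
    · rw [mFun_eq hb]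
      constructor
      · intro h
        refine Or.inr (Or.inr ⟨Fin.ext hb, ?_⟩)
        rw [hLX a]
        exact (hAdjU _).mp h.symm
      · intro h
        rcases addG_adj_cases h with ⟨_, hb2⟩ | ⟨hat, _⟩ | ⟨_, hax⟩
        · rw [del_fst_val] at hb2; omega
        · exact absurd (congrArg Fin.val hat) (by rw [del_fst_val]; omega)
        · rw [hLX a] at hax
          exact ((hAdjU _).mpr hax).symm
    · refine iff_of_false ?_ ?_
      · intro h
        exact keep_ne_u (mFun_mem_keep ha) (DSet_only (mFun_mem_D hb) _ h)
      · intro h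
        rcases addG_adj_cases h with ⟨_, hb2⟩ | ⟨hat, _⟩ | ⟨hbt, _⟩
        · rw [del_fst_val] at hb2; omega
        · exact absurd (congrArg Fin.val hat) (by rw [del_fst_val]; omega)
        · exact absurd (congrArg Fin.val hbt) (by rw [del_fst_val]; omega)
    · rw [mFun_eq ha]
      constructor
      · intro h
        exact Or.inr (Or.inl ⟨Fin.ext ha, by rw [hLX b]; exact (hAdjU _).mp h⟩)
      · intro h
        rcases addG_adj_cases h with ⟨ha2, _⟩ | ⟨_, hbx⟩ | ⟨hbt, _⟩
        · rw [del_fst_val] at ha2; omega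
        · rw [hLX b] at hbx
          exact (hAdjU _).mpr hbx
        · exact absurd (congrArg Fin.val hbt) (by rw [del_fst_val]; omega)
    · rw [mFun_eq ha, mFun_eq hb]
      refine iff_of_false (G.G.loopless.irrefl u) ?_
      intro h
      rcases addG_adj_cases h with ⟨ha2, _⟩ | ⟨_, hbx⟩ | ⟨_, hax⟩
      · rw [del_fst_val] at ha2; omega
      · exact hbx (by rw [show b = (del G u).1 from Fin.ext hb]; exact t_mem_addX _ _)
      · exact hax (by rw [show a = (del G u).1 from Fin.ext ha]; exact t_mem_addX _ _)
    · rw [mFun_eq ha]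
      refine iff_of_true (hu2 _ (DSet_not_memX (mFun_mem_D hb))) ?_
      refine Or.inr (Or.inl ⟨Fin.ext ha, ?_⟩)
      have hge : ¬ b.val < ((del G u).1 : Fin n).val := by rw [del_fst_val]; omega
      rw [mem_addX_of_ge hge]
      exact hanet (by omega)
    · refine iff_of_false ?_ ?_
      · intro h
        exact keep_ne_u (mFun_mem_keep hb) (DSet_only (mFun_mem_D ha) _ h.symm)
      · intro h
        rcases addG_adj_cases h with ⟨ha2, _⟩ | ⟨hat, _⟩ | ⟨hbt, _⟩
        · rw [del_fst_val] at ha2; omega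
        · exact absurd (congrArg Fin.val hat) (by rw [del_fst_val]; omega)
        · exact absurd (congrArg Fin.val hbt) (by rw [del_fst_val]; omega)
    · rw [mFun_eq hb]
      refine iff_of_true (hu2 _ (DSet_not_memX (mFun_mem_D ha))).symm ?_
      refine Or.inr (Or.inr ⟨Fin.ext hb, ?_⟩)
      have hge : ¬ a.val < ((del G u).1 : Fin n).val := by rw [del_fst_val]; omega
      rw [mem_addX_of_ge hge]
      exact hanet (by omega)
    · refine iff_of_false ?_ ?_
      · intro h
        rcases G.bip _ _ h with ⟨h1, _⟩ | ⟨_, h2⟩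
        · exact DSet_not_memX (mFun_mem_D ha) h1
        · exact DSet_not_memX (mFun_mem_D hb) h2
      · intro h
        rcases addG_adj_cases h with ⟨ha2, _⟩ | ⟨hat, _⟩ | ⟨hbt, _⟩
        · rw [del_fst_val] at ha2; omega
        · exact absurd (congrArg Fin.val hat) (by rw [del_fst_val]; omega)
        · exact absurd (congrArg Fin.val hbt) (by rw [del_fst_val]; omega)
  refine ⟨⟨Equiv.ofBijective (mFun G u) (mFun_bij G u), ?_⟩, ?_⟩
  · intro a b
    exact hadj a b
  · intro v
    exact hLX v


lemma t_universal (t : Fin n) (B : XYGraph t.val) :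
    ∀ y, y ∉ (bwdG t B).X → (bwdG t B).G.Adj t y :=
  fun _ hy => Or.inr (Or.inl ⟨rfl, hy⟩)

end XYComp


/-- Compilation theorem for XY-graphs: there is a bijection between isomorphism
classes of unbalanced XY-graphs on `n` vertices and isomorphism classes of
XY-graphs with no isolates in `Y` on `t` vertices, `0 ≤ t ≤ n − 1`. -/
theorem xy_compilation (n : ℕ) :
    Nonempty (Quot (UXYRel n) ≃ Quot (SmallXYRel n)) := by
  refine ⟨⟨Quot.map XYComp.fwd (fun A B h => XYComp.fwd_rel h),
          Quot.map XYComp.bwd (fun A B h => XYComp.bwd_rel h), ?_, ?_⟩⟩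
  · intro q
    induction q using Quot.ind with | _ A => ?_
    show Quot.mk _ (XYComp.bwd (XYComp.fwd A)) = Quot.mk _ A
    obtain ⟨hu, hu2⟩ := Classical.choose_spec A.2.2
    exact Quot.sound (XYComp.bwd_del A _ hu hu2)
  · intro q
    induction q using Quot.ind with | _ B => ?_
    show Quot.mk _ (XYComp.fwd (XYComp.bwd B)) = Quot.mk _ B
    obtain ⟨t, B'⟩ := B
    obtain ⟨hu, hu2⟩ :=
      Classical.choose_spec (XYComp.bwd (⟨t, B'⟩ : Σ t : Fin n, {A : XYGraph t.val // NoIsolateY A})).2.2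
    apply Quot.sound
    refine XYComp.small_trans ?_ (XYComp.fwd_bwd t B')
    exact XYComp.del_swap hu hu2 (XYComp.t_mem_addX t B'.1) (XYComp.t_universal t B'.1)
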